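/- Let M be an LTS with alphabet Σ = Ω ∪̇ Υ, controllable events Σ_c and uncontrollable events Σᵤ, let ∼_Υ be a synthesis observational equivalence on M with respect to Υ, and let M′ = M/∼_Υ be the quotient; assume M′ is minimized with respect to synthesis observational equivalence, i.e., no synthesis observational equivalence on M′ with respect to Υ relates two distinct states of M′. If s is a state of M′ and π ∈ Υ* is a nonempty finite sequence of events with s →^π s in M′, then for every event l occurring in π we have s →ˡ s in M′. -/

import Mathlib

namespace CompSynth

/-- A labelled transition system over event labels `E`. -/
structure LTS (E : Type) where
  State : Type
  finState : Finite State
  alph : Finset E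
  trans : State → E → State → Prop
  init : State

namespace LTS

variable {E : Type} [DecidableEq E]

/-- Parallel composition of two LTSs. -/
def par (M N : LTS E) : LTS E where
  State := M.State × N.State
  finState := by haveI := M.finState; haveI := N.finState; exact inferInstance
  alph := M.alph ∪ N.alph
  trans := fun s l t =>
    (M.trans s.1 l t.1 ∧ l ∈ M.alph ∧ l ∉ N.alph ∧ t.2 = s.2) ∨
    (N.trans s.2 l t.2 ∧ l ∈ N.alph ∧ l ∉ M.alph ∧ t.1 = s.1) ∨
    (M.trans s.1 l t.1 ∧ N.trans s.2 l t.2 ∧ l ∈ M.alph ∧ l ∈ N.alph)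
  init := (M.init, N.init)

/-- The trivial (one-state, empty-alphabet) LTS. -/
def unitLTS : LTS E where
  State := Unit
  finState := inferInstance
  alph := ∅
  trans := fun _ _ _ => False
  init := ()

/-- Parallel composition of a finite list of LTSs. -/
def parList : List (LTS E) → LTS E
  | [] => unitLTS
  | [M] => M
  | M :: Ms => M.par (parList Ms)

/-- Reachable states of an LTS. -/
inductive Reach (M : LTS E) : M.State → Prop
  | init : Reach M M.init
  | step {s l t} : Reach M s → M.trans s l t → Reach M t

/-- Finite runs (paths) between states, labelled by a word. -/
inductive Path (M : LTS E) : M.State → List E → M.State → Prop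
  | nil (s : M.State) : Path M s [] s
  | cons {s t u : M.State} {l : E} {w : List E} :
      M.trans s l t → Path M t w u → Path M s (l :: w) u

/-- Finite traces of an LTS. -/
def FinTr (M : LTS E) (w : List E) : Prop := ∃ s, Path M M.init w s

/-- Infinite traces of an LTS. -/
def InfTr (M : LTS E) (π : ℕ → E) : Prop :=
  ∃ ρ : ℕ → M.State, ρ 0 = M.init ∧ ∀ i, M.trans (ρ i) (π i) (ρ (i + 1))

/-- No state has two outgoing transitions with the same label. -/
def Deterministic (M : LTS E) : Prop :=
  ∀ s l t t', M.trans s l t → M.trans s l t' → t = t'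

/-- Every reachable state has an outgoing transition. -/
def DeadlockFree (M : LTS E) : Prop :=
  ∀ s, Reach M s → ∃ l t, M.trans s l t

/-- `C` is legal for `M` w.r.t. the uncontrollable events `Eu`. -/
def Legal (M C : LTS E) (Eu : Finset E) : Prop :=
  ∀ p : (M.par C).State, Reach (M.par C) p → ∀ l ∈ Eu,
    ((∃ q, (M.par C).trans p l q) ↔ (∃ t, M.trans p.1 l t))

/-- Restriction of an LTS to a set of states containing the initial state. -/
def restrict (M : LTS E) (S' : Set M.State) (h : M.init ∈ S') : LTS E where
  State := {s // s ∈ S'}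
  finState := by haveI := M.finState; exact inferInstance
  alph := M.alph
  trans := fun x l y => M.trans x.1 l y.1
  init := ⟨M.init, h⟩

/-- The controlled subplant of `M` by the safe controller `restrict M S' h`
with respect to the uncontrolled shared events `Ω`: transitions of the safe
controller together with transitions to a fresh deadlock state `⊥` (here `none`)
on events of `Ω` enabled in `M` but removed by the safe controller. -/
def ctrlSub (M : LTS E) (S' : Set M.State) (h : M.init ∈ S') (Ω : Finset E) : LTS E where
  State := Option {s // s ∈ S'}
  finState := by
    haveI := M.finState
    haveI := Fintype.ofFinite M.State
    haveI : Finite {s // s ∈ S'} := inferInstance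
    haveI := Fintype.ofFinite {s // s ∈ S'}
    exact inferInstance
  alph := M.alph
  trans := fun x l y =>
    match x, y with
    | some a, some b => M.trans a.1 l b.1
    | some a, none =>
        l ∈ Ω ∧ (∃ t, M.trans a.1 l t) ∧ ∀ t, t ∈ S' → ¬ M.trans a.1 l t
    | none, _ => False
  init := some ⟨M.init, h⟩

/-- Quotient LTS by a relation on states. -/
def quot (M : LTS E) (r : M.State → M.State → Prop) : LTS E where
  State := Quot r
  finState := by
    haveI := M.finState
    exact Finite.of_surjective (Quot.mk r) (fun q => Quot.exists_rep q)
  alph := M.alph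
  trans := fun qs l qt => ∃ s t, M.trans s l t ∧ Quot.mk r s = qs ∧ Quot.mk r t = qt
  init := Quot.mk r M.init

/-- Removal of self-loop transitions labelled by events in `μs`. -/
def rmLoops (P : LTS E) (μs : Finset E) : LTS E :=
  { P with trans := fun s l t => P.trans s l t ∧ ¬(l ∈ μs ∧ t = s) }

/-- Synthesis observational equivalence on `M` w.r.t. local events `Υ`,
with controllable events `Ec` (uncontrollable events are those not in `Ec`). -/
def IsSOE (M : LTS E) (Ec Υ : Finset E) (r : M.State → M.State → Prop) : Prop :=
  Equivalence r ∧
  (∀ x₁ x₂ y₁ u, r x₁ x₂ → u ∈ M.alph → u ∉ Ec → M.trans x₁ u y₁ →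
    ∃ (π₁ π₂ : List E) (y₂ : M.State),
      (∀ l ∈ π₁, l ∈ Υ ∧ l ∉ Ec) ∧ (∀ l ∈ π₂, l ∈ Υ ∧ l ∉ Ec) ∧
      Path M x₂ (π₁ ++ (if u ∈ Υ then [] else [u]) ++ π₂) y₂ ∧ r y₁ y₂) ∧
  (∀ x₁ x₂ y₁ c, r x₁ x₂ → c ∈ Ec → M.trans x₁ c y₁ →
    ∃ (n : ℕ) (xs : Fin (n + 1) → M.State) (τ : Fin n → E) (y₂ : M.State),
      xs 0 = x₂ ∧
      (∀ i : Fin n, M.trans (xs i.castSucc) (τ i) (xs i.succ) ∧ τ i ∈ Υ ∧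
        (τ i ∈ Ec → r x₁ (xs i.succ))) ∧
      (if c ∈ Υ then y₂ = xs (Fin.last n) else M.trans (xs (Fin.last n)) c y₂) ∧
      r y₁ y₂)

/-- `l` is a self-loop event added by the `r`-reduction of `M`. -/
def SelfLoopAdded (M : LTS E) (r : M.State → M.State → Prop) (l : E) : Prop :=
  ∃ s t, M.trans s l t ∧ r s t ∧ s ≠ t

end LTS

/-- Syntax of LTL formulas over atomic events in `E`. -/
inductive LTL (E : Type) where
  | tru : LTL E
  | atom : E → LTL E
  | neg : LTL E → LTL E
  | orf : LTL E → LTL E → LTL E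
  | next : LTL E → LTL E
  | untl : LTL E → LTL E → LTL E

namespace LTL

variable {E : Type}

/-- Satisfaction of an LTL formula by an infinite trace at a position. -/
def satAt (π : ℕ → E) : LTL E → ℕ → Prop
  | tru, _ => True
  | atom e, i => π i = e
  | neg φ, i => ¬ satAt π φ i
  | orf φ ψ, i => satAt π φ i ∨ satAt π ψ i
  | next φ, i => satAt π φ (i + 1)
  | untl φ ψ, i => ∃ k, i ≤ k ∧ satAt π ψ k ∧ ∀ j, i ≤ j → j < k → satAt π φ j

/-- Satisfaction of an LTL formula by an infinite trace. -/
def sat (π : ℕ → E) (φ : LTL E) : Prop := satAt π φ 0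

def fls : LTL E := neg tru
def andf (φ ψ : LTL E) : LTL E := neg (orf (neg φ) (neg ψ))
def imp (φ ψ : LTL E) : LTL E := orf (neg φ) ψ
def ev (φ : LTL E) : LTL E := untl tru φ
def alw (φ : LTL E) : LTL E := neg (ev (neg φ))
def alwEv (φ : LTL E) : LTL E := alw (ev φ)
def conjList (l : List (LTL E)) : LTL E := l.foldr andf tru
def disjList (l : List (LTL E)) : LTL E := l.foldr orf fls

/-- The atomic events occurring in a formula. -/
def events [DecidableEq E] : LTL E → Finset E
  | tru => ∅
  | atom e => {e}
  | neg φ => events φ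
  | orf φ ψ => events φ ∪ events ψ
  | next φ => events φ
  | untl φ ψ => events φ ∪ events ψ

/-- Boolean combinations of atomic events (no temporal operators). -/
def isBool : LTL E → Prop
  | tru => True
  | atom _ => True
  | neg φ => isBool φ
  | orf φ ψ => isBool φ ∧ isBool ψ
  | next _ => False
  | untl _ _ => False

end LTL

variable {E : Type} [DecidableEq E]

/-- The GR(1) formula `⋀ □◇aᵢ ⟹ ⋀ □◇gⱼ`. -/
def GR1 (As Gs : List (LTL E)) : LTL E :=
  LTL.imp (LTL.conjList (As.map LTL.alwEv)) (LTL.conjList (Gs.map LTL.alwEv))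

/-- The boolean formula `⋀_{l ∈ μ} ¬l`. -/
noncomputable def finsetNegConj (μ : Finset E) : LTL E :=
  LTL.conjList (μ.toList.map fun l => LTL.neg (LTL.atom l))

/-- The formula `□◇(⋀_{l ∈ μ} ¬l) ⟹ φ`. -/
noncomputable def muGoal (μ : Finset E) (φ : LTL E) : LTL E :=
  LTL.imp (LTL.alwEv (finsetNegConj μ)) φ

open LTS

/-- `C` is a solution of the control problem `⟨P, Ec, φ⟩`. -/
def Solution (P : LTS E) (Ec : Finset E) (φ : LTL E) (C : LTS E) : Prop :=
  Deterministic C ∧ Legal P C (P.alph \ Ec) ∧ DeadlockFree (P.par C) ∧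
  ∀ π : ℕ → E, InfTr (P.par C) π → LTL.sat π φ

/-- `s` is a winning state of the control problem `⟨P, Ec, φ⟩`. -/
def Winning (P : LTS E) (Ec : Finset E) (φ : LTL E) (s : P.State) : Prop :=
  ∃ C : LTS E, Solution P Ec φ C ∧ ∃ c : C.State, Reach (C.par P) (c, s)

/-- Controllers of the synthesis tuple `(Ms, Cs, μ)`. -/
def Cont (Ec : Finset E) (φ : LTL E) (Ms Cs : List (LTS E)) (μ : Finset E) :
    Set (LTS E) :=
  { X | ∃ CM : LTS E, Solution (parList Ms) Ec (muGoal μ φ) CM ∧ X = parList (CM :: Cs) }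



section SelfLoopAux

variable {E : Type} [DecidableEq E]

theorem path_append {M : LTS E} {x y z : M.State} {w v : List E}
    (h1 : Path M x w y) : Path M y v z → Path M x (w ++ v) z := by
  induction h1 with
  | nil s => exact fun h => h
  | cons h p ih => exact fun h2 => Path.cons h (ih h2)

/-- Paths labelled by uncontrollable local events. -/
def UP (N : LTS E) (Ec Υ : Finset E) (x y : N.State) : Prop :=
  ∃ w : List E, (∀ l ∈ w, l ∈ Υ ∧ l ∉ Ec) ∧ Path N x w y

theorem UP.refl (N : LTS E) (Ec Υ : Finset E) (x : N.State) : UP N Ec Υ x x :=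
  ⟨[], by simp, Path.nil x⟩

theorem UP.trans {N : LTS E} {Ec Υ : Finset E} {x y z : N.State}
    (h1 : UP N Ec Υ x y) (h2 : UP N Ec Υ y z) : UP N Ec Υ x z := by
  obtain ⟨w1, hw1, p1⟩ := h1
  obtain ⟨w2, hw2, p2⟩ := h2
  refine ⟨w1 ++ w2, ?_, path_append p1 p2⟩
  intro l hl
  rcases List.mem_append.1 hl with h | h
  · exact hw1 l h
  · exact hw2 l h

theorem UP.single {N : LTS E} {Ec Υ : Finset E} {x y : N.State} {l : E}
    (hl : l ∈ Υ) (hlc : l ∉ Ec) (h : N.trans x l y) : UP N Ec Υ x y :=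
  ⟨[l], by simp [hl, hlc], Path.cons h (Path.nil y)⟩

theorem up_of_fin {M : LTS E} {Ec Υ : Finset E} {r : M.State → M.State → Prop}
    (a : M.State) :
    ∀ (n : ℕ) (xs : Fin (n + 1) → M.State) (τ : Fin n → E),
      (∀ i : Fin n, M.trans (xs i.castSucc) (τ i) (xs i.succ) ∧ τ i ∈ Υ ∧
        (τ i ∈ Ec → r a (xs i.succ))) →
      xs 0 = a →
      UP (M.quot r) Ec Υ (Quot.mk r a) (Quot.mk r (xs (Fin.last n))) := by
  intro n
  induction n with
  | zero =>
      intro xs τ _ h0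
      have hx : xs (Fin.last 0) = a := by rw [← h0]; rfl
      rw [hx]
      exact UP.refl _ _ _ _
  | succ n ih =>
      intro xs τ h h0
      have step := h (Fin.last n)
      have IH := ih (fun i => xs i.castSucc) (fun i => τ i.castSucc)
        (by
          intro i
          have := h i.castSucc
          exact this)
        (by simpa using h0)
      by_cases hec : τ (Fin.last n) ∈ Ec
      · have hra := step.2.2 hec
        have heq : Quot.mk r a = Quot.mk r (xs (Fin.last (n + 1))) := by
          rw [← Fin.succ_last]; exact Quot.sound hra
        rw [← heq]
        exact UP.refl _ _ _ _
      · refine UP.trans IH (UP.single step.2.1 hec ?_)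
        refine ⟨_, _, step.1, rfl, ?_⟩
        rw [Fin.succ_last]

theorem up_shadow {M : LTS E} {Ec Υ : Finset E} {r : M.State → M.State → Prop}
    (hr : IsSOE M Ec Υ r) {X Y : (M.quot r).State} {c : E}
    (hcE : c ∈ Ec) (hcU : c ∈ Υ) (h : (M.quot r).trans X c Y) :
    UP (M.quot r) Ec Υ X Y := by
  obtain ⟨a, b, hab, hXa, hYb⟩ := h
  obtain ⟨n, xs, τ, y₂, hxs0, hstep, hif, hy⟩ :=
    hr.2.2 a a b c (hr.1.refl a) hcE hab
  rw [if_pos hcU] at hif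
  subst hif
  have h1 := up_of_fin a n xs τ hstep hxs0
  have h2 : Quot.mk r (xs (Fin.last n)) = Quot.mk r b := (Quot.sound hy).symm
  subst hXa; subst hYb
  rw [← h2]
  exact h1

theorem up_of_step {M : LTS E} {Ec Υ : Finset E} {r : M.State → M.State → Prop}
    (hr : IsSOE M Ec Υ r) {x y : (M.quot r).State} {l : E}
    (hl : l ∈ Υ) (h : (M.quot r).trans x l y) : UP (M.quot r) Ec Υ x y := by
  by_cases hec : l ∈ Ec
  · exact up_shadow hr hec hl h
  · exact UP.single hl hec h

theorem up_of_path {M : LTS E} {Ec Υ : Finset E} {r : M.State → M.State → Prop}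
    (hr : IsSOE M Ec Υ r) :
    ∀ {x : (M.quot r).State} {w : List E} {y : (M.quot r).State},
      Path (M.quot r) x w y → (∀ l ∈ w, l ∈ Υ) → UP (M.quot r) Ec Υ x y := by
  intro x w y hp
  induction hp with
  | nil z => exact fun _ => UP.refl _ _ _ _
  | cons h p ih =>
      intro hw
      exact UP.trans (up_of_step hr (hw _ (List.mem_cons_self)) h)
        (ih fun l hl => hw l (List.mem_cons_of_mem _ hl))

theorem fin_of_path {N : LTS E} {Ec Υ : Finset E} :
    ∀ {x : N.State} {w : List E} {y : N.State}, Path N x w y →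
      (∀ l ∈ w, l ∈ Υ ∧ l ∉ Ec) →
      ∃ (n : ℕ) (xs : Fin (n + 1) → N.State) (τ : Fin n → E),
        xs 0 = x ∧ xs (Fin.last n) = y ∧
        ∀ i : Fin n, N.trans (xs i.castSucc) (τ i) (xs i.succ) ∧ τ i ∈ Υ ∧ τ i ∉ Ec := by
  intro x w y hp
  induction hp with
  | nil z => exact fun _ => ⟨0, fun _ => z, Fin.elim0, rfl, rfl, fun i => i.elim0⟩
  | cons h p ih =>
      rename_i a b u l w'
      intro hw
      obtain ⟨n, xs, τ, h0, hl, hs⟩ := ih (fun l hl => hw l (List.mem_cons_of_mem _ hl))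
      refine ⟨n + 1, Fin.cons a xs, Fin.cons l τ, rfl, ?_, ?_⟩
      · rw [← Fin.succ_last, Fin.cons_succ, hl]
      · intro i
        refine Fin.cases ?_ ?_ i
        · refine ⟨?_, (hw l (List.mem_cons_self)).1, (hw l (List.mem_cons_self)).2⟩
          simpa [Fin.cons_succ, h0] using h
        · intro j
          have hj := hs j
          refine ⟨?_, hj.2.1, hj.2.2⟩
          have e1 : (Fin.cons a xs : Fin (n + 2) → N.State) (j.succ).castSucc = xs j.castSucc := by
            rw [← Fin.succ_castSucc, Fin.cons_succ]
          have e2 : (Fin.cons a xs : Fin (n + 2) → N.State) (j.succ).succ = xs j.succ := by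
            rw [Fin.cons_succ]
          rw [Fin.cons_succ, e1, e2]
          exact hj.1

end SelfLoopAux

/-- In a quotient LTS that is minimized w.r.t. synthesis observational
equivalence, any cycle on local events at a state implies self-loops on each of its
events at that state. -/
theorem minimized_quotient_selfloops
    (M : LTS E) (Ec Υ : Finset E) (hΥ : Υ ⊆ M.alph)
    (r : M.State → M.State → Prop) (hr : LTS.IsSOE M Ec Υ r)
    (hmin : ∀ r' : (M.quot r).State → (M.quot r).State → Prop,
      LTS.IsSOE (M.quot r) Ec Υ r' → ∀ x y, r' x y → x = y)
    (s : (M.quot r).State) (π : List E) (hne : π ≠ [])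
    (hloc : ∀ l ∈ π, l ∈ Υ) (hpath : LTS.Path (M.quot r) s π s) :
    ∀ l ∈ π, (M.quot r).trans s l s := by
  classical
  let D : (M.quot r).State → Prop :=
    fun x => UP (M.quot r) Ec Υ s x ∧ UP (M.quot r) Ec Υ x s
  let r' : (M.quot r).State → (M.quot r).State → Prop :=
    fun x y => x = y ∨ (D x ∧ D y)
  have hup21 : ∀ {x₁ x₂}, r' x₁ x₂ → UP (M.quot r) Ec Υ x₂ x₁ := by
    intro x₁ x₂ h
    rcases h with rfl | ⟨h1, h2⟩
    · exact UP.refl _ _ _ _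
    · exact UP.trans h2.2 h1.1
  have hsoe : LTS.IsSOE (M.quot r) Ec Υ r' := by
    refine ⟨⟨fun x => Or.inl rfl, ?_, ?_⟩, ?_, ?_⟩
    · intro x y h
      rcases h with rfl | ⟨h1, h2⟩
      · exact Or.inl rfl
      · exact Or.inr ⟨h2, h1⟩
    · intro x y z hxy hyz
      rcases hxy with rfl | ⟨h1, h2⟩
      · exact hyz
      · rcases hyz with rfl | ⟨h3, h4⟩
        · exact Or.inr ⟨h1, h2⟩
        · exact Or.inr ⟨h1, h4⟩
    · -- uncontrollable condition
      intro x₁ x₂ y₁ u hrel _ huE htr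
      obtain ⟨w, hw, pw⟩ := hup21 hrel
      by_cases hu : u ∈ Υ
      · refine ⟨w ++ [u], [], y₁, ?_, by simp, ?_, Or.inl rfl⟩
        · intro l hl
          rcases List.mem_append.1 hl with h | h
          · exact hw l h
          · simp only [List.mem_singleton] at h
            subst h; exact ⟨hu, huE⟩
        · rw [if_pos hu]
          simpa using path_append pw (Path.cons htr (Path.nil y₁))
      · refine ⟨w, [], y₁, hw, by simp, ?_, Or.inl rfl⟩
        rw [if_neg hu]
        simpa using path_append pw (Path.cons htr (Path.nil y₁))
    · -- controllable condition
      intro x₁ x₂ y₁ c hrel hcE htr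
      by_cases hc : c ∈ Υ
      · have hup : UP (M.quot r) Ec Υ x₂ y₁ :=
          UP.trans (hup21 hrel) (up_shadow hr hcE hc htr)
        obtain ⟨w, hw, pw⟩ := hup
        obtain ⟨n, xs, τ, h0, hl, hs⟩ := fin_of_path pw hw
        refine ⟨n, xs, τ, y₁, h0, ?_, ?_, Or.inl rfl⟩
        · intro i
          exact ⟨(hs i).1, (hs i).2.1, fun hec => absurd hec (hs i).2.2⟩
        · rw [if_pos hc]; exact hl.symm
      · obtain ⟨w, hw, pw⟩ := hup21 hrel
        obtain ⟨n, xs, τ, h0, hl, hs⟩ := fin_of_path pw hw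
        refine ⟨n, xs, τ, y₁, h0, ?_, ?_, Or.inl rfl⟩
        · intro i
          exact ⟨(hs i).1, (hs i).2.1, fun hec => absurd hec (hs i).2.2⟩
        · rw [if_neg hc, hl]; exact htr
  have collapse := hmin r' hsoe
  have hDs : D s := ⟨UP.refl _ _ _ _, UP.refl _ _ _ _⟩
  have key : ∀ (x : (M.quot r).State) (w : List E) (y : (M.quot r).State),
      LTS.Path (M.quot r) x w y → (∀ l ∈ w, l ∈ Υ) → D x →
      UP (M.quot r) Ec Υ y s → ∀ l ∈ w, (M.quot r).trans s l s := by
    intro x w y hp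
    induction hp with
    | nil z => intro _ _ _ l hl; exact absurd hl List.not_mem_nil
    | cons h p ih =>
        rename_i a b z l w'
        intro hw hDa hzs
        have hab : UP (M.quot r) Ec Υ a b :=
          up_of_step hr (hw l (List.mem_cons_self)) h
        have hbz : UP (M.quot r) Ec Υ b z :=
          up_of_path hr p (fun l' hl' => hw l' (List.mem_cons_of_mem _ hl'))
        have hDb : D b := ⟨UP.trans hDa.1 hab, UP.trans hbz hzs⟩
        have hsa : s = a := collapse s a (Or.inr ⟨hDs, hDa⟩)
        have hsb : s = b := collapse s b (Or.inr ⟨hDs, hDb⟩)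
        intro l' hl'
        rcases List.mem_cons.1 hl' with rfl | hl'
        · have htr := h
          rw [← hsa, ← hsb] at htr
          exact htr
        · exact ih (fun l'' h'' => hw l'' (List.mem_cons_of_mem _ h'')) hDb hzs l' hl'
  exact fun l hl => key s π s hpath hloc hDs (UP.refl _ _ _ _) l hl


end CompSynth
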